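/- Let G be the cycle graph on vertices {1,…,n} with edges (i,i+1) for 1 ≤ i ≤ n−1 together with (n,1). For every configuration C on G there exists a sequence of at most n matchings, none using the edge (n,1), that solves the instance (G,C); consequently the stretch factor of the lower bound d_max on n-cycle graphs is at most n. -/

import Mathlib

/-- A matching of the graph `G`, encoded as an involution of the vertex set that
moves vertices only along edges of `G`. -/
def IsMatchingPerm {V : Type*} (G : SimpleGraph V) (m : V → V) : Prop :=
  Function.Involutive m ∧ ∀ v, m v = v ∨ G.Adj v (m v)

/-- The configuration obtained from `C` by applying the sequence of matchings
`ms = [M₁, …, M_k]` (with `M₁` applied first):  `M_k ⋯ M₁ C = C ∘ m₁ ∘ ⋯ ∘ m_k`,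
where `(M C)(v) = C (m v)`. -/
def routeSeq {V : Type*} (C : V → V) (ms : List (V → V)) : V → V :=
  C ∘ ms.foldr (· ∘ ·) id

/-- The sequence of matchings `ms = (M₁, …, M_k)` solves the instance `(G, C)`,
i.e. `M_k ⋯ M₁ C = Id`. -/
def Solves {V : Type*} (G : SimpleGraph V) (C : V → V) (ms : List (V → V)) : Prop :=
  (∀ m ∈ ms, IsMatchingPerm G m) ∧ routeSeq C ms = id

/-- The cycle graph on vertices `{0, …, n-1}` (representing `{1, …, n}`),
with edges `(i, i+1)` for `i < n-1` together with `(n-1, 0)`. -/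
def cycleGraph (n : ℕ) : SimpleGraph (Fin n) :=
  SimpleGraph.fromRel fun i j => (i.val + 1) % n = j.val

set_option linter.unusedSectionVars false
set_option maxHeartbeats 1000000

def tauF (n e : ℕ) (a : ℕ → ℕ) : ℕ → ℕ := fun i =>
  if i % 2 = e % 2 ∧ i + 1 < n ∧ a (i+1) < a i then i + 1
  else if 1 ≤ i ∧ (i-1) % 2 = e % 2 ∧ i < n ∧ a i < a (i-1) then i - 1
  else i

def AtF (n : ℕ) (a0 : ℕ → ℕ) : ℕ → ℕ → ℕ
  | 0 => a0
  | t+1 => fun i => AtF n a0 t (tauF n t (AtF n a0 t) i)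

def QstepF (n e : ℕ) (f : ℕ → ℕ) : ℕ → ℕ := fun j =>
  if j = 0 then n
  else if f j % 2 = e % 2 ∧ f (j-1) ≥ f j + 2 then f j + 1 else f j

def QtF (n : ℕ) (init : ℕ → ℕ) : ℕ → ℕ → ℕ
  | 0 => init
  | t+1 => QstepF n t (QtF n init t)

section core

variable {n : ℕ} {init : ℕ → ℕ} {m : ℕ}
variable (h0 : init 0 = n) (hanti : ∀ j, j < m → init (j+1) < init j)

lemma QtF_zero_t : QtF n init 0 = init := rfl

lemma Qt_succ_apply (t j : ℕ) (hj : 1 ≤ j) :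
    QtF n init (t+1) j =
      if (QtF n init t j) % 2 = t % 2 ∧ QtF n init t (j-1) ≥ QtF n init t j + 2
      then QtF n init t j + 1 else QtF n init t j := by
  show QstepF n t (QtF n init t) j = _
  unfold QstepF
  rw [if_neg (by omega : ¬ j = 0)]

include h0 in
lemma Qt_zero : ∀ t, QtF n init t 0 = n := by
  intro t
  cases t with
  | zero => exact h0
  | succ t => show QstepF n t (QtF n init t) 0 = n
              unfold QstepF; simp

include h0 in
lemma Qt_step_ge : ∀ t j, QtF n init t j ≤ QtF n init (t+1) j := by
  intro t j
  rcases Nat.eq_zero_or_pos j with hj | hj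
  · subst hj; rw [Qt_zero h0, Qt_zero h0]
  · rw [Qt_succ_apply t j hj]
    split_ifs <;> omega

include h0 hanti in
lemma Qt_anti : ∀ t, ∀ j, j < m → QtF n init t (j+1) < QtF n init t j := by
  intro t
  induction t with
  | zero => exact hanti
  | succ t ih =>
    intro j hj
    have h1 : QtF n init t j ≤ QtF n init (t+1) j := Qt_step_ge h0 t j
    have h2 := ih j hj
    rw [Qt_succ_apply t (j+1) (by omega)]
    have hr : (j + 1) - 1 = j := by omega
    rw [hr]
    split_ifs <;> omega

include h0 hanti in
lemma Qt_le : ∀ t j, j ≤ m → QtF n init t j ≤ n - j := by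
  intro t
  induction t with
  | zero =>
    intro j hj
    rw [QtF_zero_t]
    induction j with
    | zero => omega
    | succ k ih =>
      have h1 := hanti k (by omega)
      have h2 := ih (by omega)
      omega
  | succ t ih =>
    intro j hj
    rcases Nat.eq_zero_or_pos j with hj0 | hj0
    · subst hj0; rw [Qt_zero h0]; omega
    · rw [Qt_succ_apply t j hj0]
      have h1 := ih j hj
      have h2 := ih (j-1) (by omega)
      split_ifs with h
      · omega
      · omega

include h0 hanti in
lemma Qt_antitone : ∀ t j j', j ≤ j' → j' ≤ m → QtF n init t j' ≤ QtF n init t j := by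
  intro t j j' hjj hj'
  induction j' with
  | zero => have h : j = 0 := by omega
            subst h; omega
  | succ k ih =>
    rcases Nat.eq_or_lt_of_le hjj with h | h
    · subst h; omega
    · have h1 := Qt_anti h0 hanti t k (by omega)
      have h2 := ih (by omega) (by omega)
      omega

include h0 hanti in
lemma Qt_strict_antitone : ∀ t j j', j < j' → j' ≤ m → QtF n init t j' < QtF n init t j := by
  intro t j j' hjj hj'
  have h1 := Qt_anti h0 hanti t j (by omega)
  have h2 := Qt_antitone h0 hanti t (j+1) j' (by omega) hj'
  omega

include h0 hanti in
lemma Qt_uniq : ∀ t j j'', 1 ≤ j → j ≤ m → 1 ≤ j'' → j'' ≤ m →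
    QtF n init t j'' = QtF n init t j + 1 → j = j'' + 1 := by
  intro t j j'' _ hjm _ hj''m heq
  rcases Nat.lt_trichotomy j j'' with h | h | h
  · have h1 := Qt_antitone h0 hanti t j j'' (by omega) hj''m
    omega
  · subst h; omega
  · by_contra hne
    have h1 : j'' + 1 < j := by omega
    have h2 := Qt_strict_antitone h0 hanti t (j''+1) j h1 hjm
    have h3 := Qt_anti h0 hanti t j'' (by omega)
    omega

include h0 hanti in
lemma Qt_stay : ∀ j, 1 ≤ j → j ≤ m → ∀ t0, QtF n init t0 j = n - j →
    ∀ t, t0 ≤ t → QtF n init t j = n - j := by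
  intro j hj1 hjm t0 h t ht
  induction t with
  | zero => have h' : t0 = 0 := by omega
            subst h'; exact h
  | succ t ih =>
    rcases Nat.lt_or_ge t0 (t+1) with h' | h'
    · have hprev := ih (by omega)
      have hle := Qt_le h0 hanti t (j-1) (by omega)
      rw [Qt_succ_apply t j hj1]
      split_ifs with hcond
      · exfalso; omega
      · exact hprev
    · have h'' : t0 = t + 1 := by omega
      subst h''; exact h

include h0 hanti in
lemma Qt_run (j s s' : ℕ) (hj1 : 1 ≤ j) (hjm : j ≤ m) (hs : 1 ≤ s)
    (hss' : s ≤ s' ∧ s' ≤ s + 1)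
    (hprev : ∀ t, s - 1 ≤ t → QtF n init t (j-1) =
      min (n - (j-1)) (QtF n init (s-1) (j-1) + (t - (s-1))))
    (hb : QtF n init (s'-1) j < n - j)
    (hpar : (QtF n init (s'-1) j) % 2 = (s'-1) % 2)
    (hgap : QtF n init (s-1) (j-1) + (s' - s) ≥ QtF n init (s'-1) j + 2) :
    ∀ t, s' - 1 ≤ t → QtF n init t j = min (n - j) (QtF n init (s'-1) j + (t - (s'-1))) := by
  intro t ht
  induction t, ht using Nat.le_induction with
  | base => omega
  | succ t ht ih =>
    have hcur := ih
    have hprevt := hprev t (by omega)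
    rw [Qt_succ_apply t j hj1]
    rcases Nat.lt_or_ge (QtF n init (s'-1) j + (t - (s'-1))) (n - j) with hc | hc
    · -- still running: current value is b + d < n - j, rule fires
      have hval : QtF n init t j = QtF n init (s'-1) j + (t - (s'-1)) := by omega
      have hparity : (QtF n init t j) % 2 = t % 2 := by omega
      have hgapt : QtF n init t (j-1) ≥ QtF n init t j + 2 := by
        rw [hprevt]
        have e1 : t - (s-1) = (t - (s'-1)) + (s' - s) := by omega
        omega
      rw [if_pos ⟨hparity, hgapt⟩]
      omega
    · -- arrived: current value = n - j; stays
      have hval : QtF n init t j = n - j := by omega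
      rw [if_neg]
      · omega
      · intro hcond
        have h2 := hcond.2
        omega

include h0 hanti in
lemma Qt_core (hm : m ≤ n) : ∀ j, j ≤ m → ∃ s, 1 ≤ s ∧ s ≤ j + 1 ∧
    ∀ t, s - 1 ≤ t → QtF n init t j = min (n - j) (QtF n init (s-1) j + (t - (s-1))) := by
  intro j
  induction j with
  | zero =>
    intro _
    refine ⟨1, le_refl 1, by omega, ?_⟩
    intro t _
    rw [Qt_zero h0, Qt_zero h0]
    omega
  | succ j ih =>
    intro hj1m
    obtain ⟨s, hs1, hsj, hrun⟩ := ih (by omega)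
    have hbc : QtF n init (s-1) (j+1) < QtF n init (s-1) j := Qt_anti h0 hanti (s-1) j (by omega)
    have hble : QtF n init (s-1) (j+1) ≤ n - (j+1) := Qt_le h0 hanti (s-1) (j+1) hj1m
    have hrunprev : ∀ t, s - 1 ≤ t → QtF n init t ((j+1)-1) =
        min (n - ((j+1)-1)) (QtF n init (s-1) ((j+1)-1) + (t - (s-1))) := by
      simpa using hrun
    rcases Nat.eq_or_lt_of_le hble with hset | hblt
    · -- already settled
      refine ⟨s, hs1, by omega, ?_⟩
      intro t ht
      have := Qt_stay h0 hanti (j+1) (by omega) hj1m (s-1) hset t ht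
      omega
    · by_cases hpar : (QtF n init (s-1) (j+1)) % 2 = (s-1) % 2
      · -- aligned: gap must be ≥ 2
        have hc2 : QtF n init (s-1) j ≥ QtF n init (s-1) (j+1) + 2 := by
          by_contra hcon
          have hceq : QtF n init (s-1) j = QtF n init (s-1) (j+1) + 1 := by omega
          rcases Nat.eq_zero_or_pos j with hj0 | hj0
          · subst hj0
            rw [Qt_zero h0] at hceq
            omega
          · have hrs := hrun s (by omega)
            have e1 : s - (s-1) = 1 := by omega
            rw [e1] at hrs
            have hcltn : QtF n init (s-1) j < n - j := by omega
            have hQs : QtF n init s j = QtF n init (s-1) j + 1 := by omega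
            have hQs2 := Qt_succ_apply (n := n) (init := init) (s-1) j hj0
            rw [(by omega : s - 1 + 1 = s)] at hQs2
            rw [hQs] at hQs2
            split_ifs at hQs2 with hcond
            · have h3 := hcond.1
              omega
            · omega
        have happ := Qt_run h0 hanti (j+1) s s (by omega) hj1m hs1 ⟨le_refl s, by omega⟩
          hrunprev hblt hpar (by simpa using hc2)
        exact ⟨s, hs1, by omega, by simpa using happ⟩
      · -- misaligned: starts at s+1
        have hQs1 : QtF n init s (j+1) = QtF n init (s-1) (j+1) := by
          have hQs2 := Qt_succ_apply (n := n) (init := init) (s-1) (j+1) (by omega)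
          rw [(by omega : s - 1 + 1 = s)] at hQs2
          rw [hQs2, if_neg]
          intro hcond
          exact hpar hcond.1
        have happ := Qt_run h0 hanti (j+1) s (s+1) (by omega) hj1m hs1 ⟨by omega, by omega⟩
          hrunprev ?hb ?hpar ?hgap
        · refine ⟨s+1, by omega, by omega, ?_⟩
          simpa using happ
        case hb =>
          simp only [Nat.add_sub_cancel]
          rw [hQs1]
          exact hblt
        case hpar =>
          simp only [Nat.add_sub_cancel]
          rw [hQs1]
          omega
        case hgap =>
          simp only [Nat.add_sub_cancel]
          rw [hQs1]
          omega

include h0 hanti in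
lemma Qt_final (hm : m ≤ n) : ∀ j, 1 ≤ j → j ≤ m → QtF n init n j = n - j := by
  intro j hj1 hjm
  obtain ⟨s, hs1, hsj, hrun⟩ := Qt_core h0 hanti hm j hjm
  have h1 := hrun n (by omega)
  have h2 : n - (s-1) ≥ n - j := by omega
  omega

end core

lemma tau_cases (n e : ℕ) (a : ℕ → ℕ) (i : ℕ) :
    tauF n e a i = i ∨ (tauF n e a i = i + 1 ∧ i + 1 < n) ∨
      (tauF n e a i = i - 1 ∧ 1 ≤ i) := by
  unfold tauF
  split_ifs with h1 h2
  · exact Or.inr (Or.inl ⟨rfl, h1.2.1⟩)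
  · exact Or.inr (Or.inr ⟨rfl, h2.1⟩)
  · exact Or.inl rfl

lemma tau_lt (n e : ℕ) (a : ℕ → ℕ) (i : ℕ) (hi : i < n) : tauF n e a i < n := by
  rcases tau_cases n e a i with h | ⟨h, h'⟩ | ⟨h, h'⟩ <;> omega

lemma tau_invol (n e : ℕ) (a : ℕ → ℕ) (i : ℕ) : tauF n e a (tauF n e a i) = i := by
  by_cases h1 : i % 2 = e % 2 ∧ i + 1 < n ∧ a (i+1) < a i
  · have e1 : tauF n e a i = i + 1 := by unfold tauF; rw [if_pos h1]
    rw [e1]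
    unfold tauF
    rw [if_neg (by intro h; have := h.1; have := h1.1; omega)]
    simp only [Nat.add_sub_cancel]
    rw [if_pos ⟨by omega, h1.1, h1.2.1, h1.2.2⟩]
  · by_cases h2 : 1 ≤ i ∧ (i-1) % 2 = e % 2 ∧ i < n ∧ a i < a (i-1)
    · have e1 : tauF n e a i = i - 1 := by unfold tauF; rw [if_neg h1, if_pos h2]
      rw [e1]
      unfold tauF
      rw [Nat.sub_add_cancel h2.1]
      rw [if_pos ⟨h2.2.1, h2.2.2.1, h2.2.2.2⟩]
    · have e1 : tauF n e a i = i := by unfold tauF; rw [if_neg h1, if_neg h2]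
      rw [e1, e1]

section bridge

variable (n : ℕ) (a0 : ℕ → ℕ) (c : ℕ)

def onesL : List ℕ := ((List.range n).filter (fun i => decide (c < a0 i))).reverse

def initQ : ℕ → ℕ := fun j => if j = 0 then n else (onesL n a0 c).getD (j-1) 0

lemma onesL_mem (i : ℕ) : i ∈ onesL n a0 c ↔ (i < n ∧ c < a0 i) := by
  unfold onesL
  rw [List.mem_reverse, List.mem_filter, List.mem_range]
  simp

lemma onesL_pair : (onesL n a0 c).Pairwise (· > ·) := by
  unfold onesL
  rw [List.pairwise_reverse]
  exact (List.pairwise_lt_range).filter _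

lemma onesL_lt (k : ℕ) (hk : k < (onesL n a0 c).length) : (onesL n a0 c).getD k 0 < n := by
  rw [List.getD_eq_getElem _ _ hk]
  have : (onesL n a0 c)[k] ∈ onesL n a0 c := List.getElem_mem hk
  exact ((onesL_mem n a0 c _).mp this).1

lemma initQ_zero : initQ n a0 c 0 = n := rfl

lemma initQ_anti : ∀ j, j < (onesL n a0 c).length →
    initQ n a0 c (j+1) < initQ n a0 c j := by
  intro j hj
  unfold initQ
  rw [if_neg (by omega : ¬ j + 1 = 0)]
  rcases Nat.eq_zero_or_pos j with h | h
  · subst h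
    simp only [if_pos rfl]
    simpa using onesL_lt n a0 c 0 hj
  · rw [if_neg (by omega : ¬ j = 0)]
    simp only [Nat.add_sub_cancel]
    rw [List.getD_eq_getElem _ _ hj, List.getD_eq_getElem _ _ (by omega : j - 1 < _)]
    exact List.pairwise_iff_getElem.mp (onesL_pair n a0 c) (j-1) j (by omega) hj (by omega)

lemma onesL_len_le : (onesL n a0 c).length ≤ n := by
  unfold onesL
  rw [List.length_reverse]
  have := List.length_filter_le (fun i => decide (c < a0 i)) (List.range n)
  simpa using this

lemma initQ_mem_iff (i : ℕ) (hi : i < n) :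
    (c < a0 i ↔ ∃ j, 1 ≤ j ∧ j ≤ (onesL n a0 c).length ∧ initQ n a0 c j = i) := by
  constructor
  · intro h
    have : i ∈ onesL n a0 c := (onesL_mem n a0 c i).mpr ⟨hi, h⟩
    obtain ⟨k, hk, he⟩ := List.mem_iff_getElem.mp this
    refine ⟨k+1, by omega, by omega, ?_⟩
    unfold initQ
    rw [if_neg (by omega : ¬ k + 1 = 0)]
    simp only [Nat.add_sub_cancel]
    rw [List.getD_eq_getElem _ _ hk]
    exact he
  · rintro ⟨j, hj1, hjm, he⟩
    have hk : j - 1 < (onesL n a0 c).length := by omega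
    have : initQ n a0 c j = (onesL n a0 c)[j-1] := by
      unfold initQ
      rw [if_neg (by omega : ¬ j = 0), List.getD_eq_getElem _ _ hk]
    rw [this] at he
    have hm : (onesL n a0 c)[j-1] ∈ onesL n a0 c := List.getElem_mem hk
    rw [he] at hm
    exact ((onesL_mem n a0 c i).mp hm).2

end bridge

lemma At_succ_apply (n : ℕ) (a0 : ℕ → ℕ) (t i : ℕ) :
    AtF n a0 (t+1) i = AtF n a0 t (tauF n t (AtF n a0 t) i) := rfl

lemma bridge (n : ℕ) (a0 : ℕ → ℕ) (c : ℕ) :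
    ∀ t i, i < n → (c < AtF n a0 t i ↔
      ∃ j, 1 ≤ j ∧ j ≤ (onesL n a0 c).length ∧ QtF n (initQ n a0 c) t j = i) := by
  have h0 := initQ_zero n a0 c
  have hanti := initQ_anti n a0 c
  have hmn := onesL_len_le n a0 c
  set m := (onesL n a0 c).length with hmdef
  set init := initQ n a0 c with hinitdef
  intro t
  induction t with
  | zero =>
    intro i hi
    exact initQ_mem_iff n a0 c i hi
  | succ t ih =>
    have hQlt : ∀ k, 1 ≤ k → k ≤ m → QtF n init t k < n := by
      intro k hk1 hkm
      have := Qt_le h0 hanti t k hkm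
      omega
    have hxQ : ∀ k, 1 ≤ k → k ≤ m → c < AtF n a0 t (QtF n init t k) := by
      intro k hk1 hkm
      exact (ih (QtF n init t k) (hQlt k hk1 hkm)).mpr ⟨k, hk1, hkm, rfl⟩
    have claim : ∀ j, 1 ≤ j → j ≤ m → ∃ j2, 1 ≤ j2 ∧ j2 ≤ m ∧
        QtF n init (t+1) j2 = tauF n t (AtF n a0 t) (QtF n init t j) ∧
        tauF n t (AtF n a0 t) (QtF n init t j2) = QtF n init (t+1) j := by
      intro j hj1 hjm
      have hqlt : QtF n init t j < n := hQlt j hj1 hjm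
      have hQj1ge : QtF n init t (j-1) ≥ QtF n init t j + 1 := by
        rcases Nat.eq_zero_or_pos (j-1) with hj10 | hj11
        · rw [hj10, Qt_zero h0]; omega
        · have h := Qt_anti h0 hanti t (j-1) (by omega)
          rw [(by omega : j - 1 + 1 = j)] at h
          omega
      by_cases hpar : QtF n init t j % 2 = t % 2
      · by_cases hgap : QtF n init t (j-1) ≥ QtF n init t j + 2
        · -- moves right
          have hq1n : QtF n init t j + 1 < n := by
            rcases Nat.eq_zero_or_pos (j-1) with hj10 | hj11
            · rw [hj10, Qt_zero h0] at hgap; omega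
            · have := Qt_le h0 hanti t (j-1) (by omega); omega
          have hno1 : ¬ (c < AtF n a0 t (QtF n init t j + 1)) := by
            intro hcon
            obtain ⟨j'', hj''1, hj''m, hj''⟩ := (ih _ hq1n).mp hcon
            have huniq := Qt_uniq h0 hanti t j j'' hj1 hjm hj''1 hj''m hj''
            have he : j - 1 = j'' := by omega
            rw [he, hj''] at hgap
            omega
          have hvala : AtF n a0 t (QtF n init t j + 1) < AtF n a0 t (QtF n init t j) := by
            have h1 := hxQ j hj1 hjm
            omega
          have htau : tauF n t (AtF n a0 t) (QtF n init t j) = QtF n init t j + 1 := by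
            unfold tauF
            split_ifs with h1 h2
            · rfl
            · exact absurd ⟨hpar, hq1n, hvala⟩ h1
            · exact absurd ⟨hpar, hq1n, hvala⟩ h1
          have hQ'j : QtF n init (t+1) j = QtF n init t j + 1 := by
            rw [Qt_succ_apply t j hj1]
            split_ifs with h
            · rfl
            · exact absurd ⟨hpar, hgap⟩ h
          exact ⟨j, hj1, hjm, by rw [hQ'j, htau], by rw [htau, hQ'j]⟩
        · have hQj1e : QtF n init t (j-1) = QtF n init t j + 1 := by omega
          have hQ'j : QtF n init (t+1) j = QtF n init t j := by
            rw [Qt_succ_apply t j hj1]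
            split_ifs with h
            · exact absurd h.2 hgap
            · rfl
          rcases Nat.eq_zero_or_pos (j-1) with hj10 | hj11
          · -- boundary: q = n-1
            have hqn : QtF n init t j + 1 = n := by
              rw [hj10, Qt_zero h0] at hQj1e; omega
            have htau : tauF n t (AtF n a0 t) (QtF n init t j) = QtF n init t j := by
              unfold tauF
              split_ifs with h1 h2
              · exfalso; have := h1.2.1; omega
              · exfalso; have ha := h2.1; have hb := h2.2.1; omega
              · rfl
            exact ⟨j, hj1, hjm, by rw [hQ'j, htau], by rw [htau, hQ'j]⟩
          · -- j ≥ 2 : the cell above is a one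
            have hone : c < AtF n a0 t (QtF n init t j + 1) := by
              have h := hxQ (j-1) hj11 (by omega)
              rw [hQj1e] at h
              exact h
            have hq1n : QtF n init t j + 1 < n := by
              have := hQlt (j-1) hj11 (by omega)
              omega
            by_cases hval : AtF n a0 t (QtF n init t j + 1) < AtF n a0 t (QtF n init t j)
            · have htau : tauF n t (AtF n a0 t) (QtF n init t j) = QtF n init t j + 1 := by
                unfold tauF
                split_ifs with h1 h2
                · rfl
                · exact absurd ⟨hpar, hq1n, hval⟩ h1
                · exact absurd ⟨hpar, hq1n, hval⟩ h1
              have hQ'j1 : QtF n init (t+1) (j-1) = QtF n init t j + 1 := by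
                rw [Qt_succ_apply t (j-1) hj11]
                split_ifs with h
                · exfalso
                  rw [hQj1e] at h
                  obtain ⟨ha, hb⟩ := h
                  omega
                · exact hQj1e
              have htau2 : tauF n t (AtF n a0 t) (QtF n init t j + 1) = QtF n init t j := by
                unfold tauF
                split_ifs with h1 h2
                · exfalso; have := h1.1; omega
                · simp only [Nat.add_sub_cancel]
                · exfalso
                  simp only [Nat.add_sub_cancel] at h2
                  exact h2 ⟨by omega, hpar, hq1n, hval⟩
              refine ⟨j-1, hj11, by omega, by rw [hQ'j1, htau], ?_⟩
              rw [hQj1e, htau2, hQ'j]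
            · have htau : tauF n t (AtF n a0 t) (QtF n init t j) = QtF n init t j := by
                unfold tauF
                split_ifs with h1 h2
                · exact absurd h1.2.2 hval
                · exfalso; have ha := h2.1; have hb := h2.2.1; omega
                · rfl
              exact ⟨j, hj1, hjm, by rw [hQ'j, htau], by rw [htau, hQ'j]⟩
      · -- parity off: stays; but might be pulled left? no: may swap with the one below
        have hQ'j : QtF n init (t+1) j = QtF n init t j := by
          rw [Qt_succ_apply t j hj1]
          split_ifs with h
          · exact absurd h.1 hpar
          · rfl
        by_cases hleft : 1 ≤ QtF n init t j ∧
            AtF n a0 t (QtF n init t j) < AtF n a0 t (QtF n init t j - 1)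
        · have htau : tauF n t (AtF n a0 t) (QtF n init t j) = QtF n init t j - 1 := by
            unfold tauF
            split_ifs with h1 h2
            · exact absurd h1.1 hpar
            · rfl
            · exfalso
              exact h2 ⟨hleft.1, by omega, hqlt, hleft.2⟩
          have hone : c < AtF n a0 t (QtF n init t j - 1) := by
            have h1 := hxQ j hj1 hjm
            omega
          obtain ⟨j'', hj''1, hj''m, hj''⟩ := (ih (QtF n init t j - 1) (by omega)).mp hone
          have huniq : j'' = j + 1 := by
            apply Qt_uniq h0 hanti t j'' j hj''1 hj''m hj1 hjm
            rw [hj'']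
            omega
          rw [huniq] at hj''
          rw [huniq] at hj''m
          have hQ'j1 : QtF n init (t+1) (j+1) = QtF n init t j - 1 := by
            rw [Qt_succ_apply t (j+1) (by omega)]
            simp only [Nat.add_sub_cancel]
            split_ifs with h
            · exfalso
              rw [hj''] at h
              obtain ⟨ha, hb⟩ := h
              omega
            · exact hj''
          have htau2 : tauF n t (AtF n a0 t) (QtF n init t j - 1) = QtF n init t j := by
            unfold tauF
            have hsub : QtF n init t j - 1 + 1 = QtF n init t j := by omega
            split_ifs with h1 h2
            · rw [hsub]
            · exfalso
              rw [hsub] at h1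
              exact h1 ⟨by omega, hqlt, hleft.2⟩
            · exfalso
              rw [hsub] at h1
              exact h1 ⟨by omega, hqlt, hleft.2⟩
          refine ⟨j+1, by omega, hj''m, by rw [hQ'j1, htau], ?_⟩
          rw [hj'', htau2, hQ'j]
        · have htau : tauF n t (AtF n a0 t) (QtF n init t j) = QtF n init t j := by
            unfold tauF
            split_ifs with h1 h2
            · exact absurd h1.1 hpar
            · exfalso
              exact hleft ⟨h2.1, h2.2.2.2⟩
            · rfl
          exact ⟨j, hj1, hjm, by rw [hQ'j, htau], by rw [htau, hQ'j]⟩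
    -- assemble the invariant step
    intro i hi
    have hti : tauF n t (AtF n a0 t) i < n := tau_lt n t (AtF n a0 t) i hi
    rw [At_succ_apply]
    constructor
    · intro hx
      obtain ⟨j, hj1, hjm, hj⟩ := (ih _ hti).mp hx
      obtain ⟨j2, h21, h2m, h2a, h2b⟩ := claim j hj1 hjm
      refine ⟨j2, h21, h2m, ?_⟩
      rw [h2a, hj, tau_invol]
    · rintro ⟨j, hj1, hjm, hj⟩
      obtain ⟨j2, h21, h2m, h2a, h2b⟩ := claim j hj1 hjm
      have he : tauF n t (AtF n a0 t) (QtF n init t j2) = i := by rw [h2b, hj]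
      have hti2 : tauF n t (AtF n a0 t) i = QtF n init t j2 := by
        rw [← he, tau_invol]
      rw [hti2]
      exact hxQ j2 h21 h2m

lemma At_lt (n : ℕ) (a0 : ℕ → ℕ) (ha0 : ∀ i, i < n → a0 i < n) :
    ∀ t i, i < n → AtF n a0 t i < n := by
  intro t
  induction t with
  | zero => exact ha0
  | succ t ih =>
    intro i hi
    rw [At_succ_apply]
    exact ih _ (tau_lt n t (AtF n a0 t) i hi)

lemma At_inj (n : ℕ) (a0 : ℕ → ℕ)
    (ha0inj : ∀ i i', i < n → i' < n → a0 i = a0 i' → i = i') :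
    ∀ t i i', i < n → i' < n → AtF n a0 t i = AtF n a0 t i' → i = i' := by
  intro t
  induction t with
  | zero => exact ha0inj
  | succ t ih =>
    intro i i' hi hi' h
    rw [At_succ_apply, At_succ_apply] at h
    have := ih _ _ (tau_lt n t (AtF n a0 t) i hi) (tau_lt n t (AtF n a0 t) i' hi') h
    have h2 := congrArg (tauF n t (AtF n a0 t)) this
    rwa [tau_invol, tau_invol] at h2

lemma At_upclosed (n : ℕ) (a0 : ℕ → ℕ) (c : ℕ) :
    ∀ i i', i ≤ i' → i' < n → c < AtF n a0 n i → c < AtF n a0 n i' := by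
  intro i i' hii hi' hc
  have h0 := initQ_zero n a0 c
  have hanti := initQ_anti n a0 c
  have hmn := onesL_len_le n a0 c
  obtain ⟨j, hj1, hjm, hj⟩ := (bridge n a0 c n i (by omega)).mp hc
  have hfin := Qt_final h0 hanti hmn j hj1 hjm
  have hij : i = n - j := by omega
  have hj'1 : 1 ≤ n - i' := by omega
  have hj'm : n - i' ≤ (onesL n a0 c).length := by omega
  have hfin' := Qt_final h0 hanti hmn (n - i') hj'1 hj'm
  apply (bridge n a0 c n i' hi').mpr
  exact ⟨n - i', hj'1, hj'm, by omega⟩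

lemma At_id (n : ℕ) (a0 : ℕ → ℕ) (ha0 : ∀ i, i < n → a0 i < n)
    (ha0inj : ∀ i i', i < n → i' < n → a0 i = a0 i' → i = i') :
    ∀ i, i < n → AtF n a0 n i = i := by
  have hflt : ∀ i, i < n → AtF n a0 n i < n := At_lt n a0 ha0 n
  have hstrict : ∀ i i', i < i' → i' < n → AtF n a0 n i < AtF n a0 n i' := by
    intro i i' hii hi'
    rcases Nat.lt_or_ge (AtF n a0 n i) (AtF n a0 n i') with h | h
    · exact h
    · rcases Nat.eq_or_lt_of_le h with h2 | h2
      · exact absurd (At_inj n a0 ha0inj n i' i hi' (by omega) h2) (by omega)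
      · have := At_upclosed n a0 (AtF n a0 n i') i i' (by omega) hi' h2
        omega
  have hge : ∀ i, i < n → i ≤ AtF n a0 n i := by
    intro i
    induction i with
    | zero => omega
    | succ i ih =>
      intro hi
      have h1 := ih (by omega)
      have h2 := hstrict i (i+1) (by omega) hi
      omega
  have hdown : ∀ k, k < n → AtF n a0 n (n-1-k) = n-1-k := by
    intro k
    induction k with
    | zero =>
      intro hk
      have h1 := hge (n-1) (by omega)
      have h2 := hflt (n-1) (by omega)
      simp only [Nat.sub_zero]
      omega
    | succ k ih =>
      intro hk
      have h1 := ih (by omega)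
      have h2 := hstrict (n-1-(k+1)) (n-1-k) (by omega) (by omega)
      have h3 := hge (n-1-(k+1)) (by omega)
      omega
  intro i hi
  have := hdown (n-1-i) (by omega)
  rw [(by omega : n-1-(n-1-i) = i)] at this
  exact this

lemma foldr_comp_apply {α : Type*} : ∀ (l : List (α → α)) (X : α → α) (v : α),
    (l.foldr (· ∘ ·) X) v = (l.foldr (· ∘ ·) id) (X v) := by
  intro l
  induction l with
  | nil => intro X v; rfl
  | cons f l ih =>
    intro X v
    show f ((l.foldr (· ∘ ·) X) v) = f ((l.foldr (· ∘ ·) id) (X v))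
    rw [ih]

theorem stmt_8' (n : ℕ) (hn : 3 ≤ n) (C : Fin n ≃ Fin n) :
    ∃ ms : List (Fin n → Fin n),
      Solves (cycleGraph n) (⇑C) ms ∧ ms.length ≤ n ∧
      ∀ m ∈ ms, m (⟨n - 1, by have := hn; omega⟩ : Fin n) ≠ (⟨0, by have := hn; omega⟩ : Fin n) := by
  classical
  set a0 : ℕ → ℕ := fun i => if h : i < n then (C ⟨i, h⟩ : ℕ) else i with ha0def
  have ha0lt : ∀ i, i < n → a0 i < n := by
    intro i hi
    rw [ha0def]
    simp only [dif_pos hi]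
    exact (C ⟨i, hi⟩).isLt
  have ha0inj : ∀ i i', i < n → i' < n → a0 i = a0 i' → i = i' := by
    intro i i' hi hi' h
    rw [ha0def] at h
    simp only [dif_pos hi, dif_pos hi'] at h
    exact congrArg Fin.val (C.injective (Fin.val_injective h))

  set Mt : ℕ → (Fin n → Fin n) :=
    fun t v => ⟨tauF n t (AtF n a0 t) v.val, tau_lt n t (AtF n a0 t) v.val v.isLt⟩ with hMtdef
  have hMtval : ∀ t (v : Fin n), (Mt t v).val = tauF n t (AtF n a0 t) v.val := fun t v => rfl
  refine ⟨(List.range n).map Mt, ⟨?_, ?_⟩, ?_, ?_⟩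
  · -- all are matching permutations
    intro mm hmm
    obtain ⟨t, _, rfl⟩ := List.mem_map.mp hmm
    constructor
    · intro v
      apply Fin.val_injective
      rw [hMtval, hMtval, tau_invol]
    · intro v
      rcases tau_cases n t (AtF n a0 t) v.val with h | ⟨h, h'⟩ | ⟨h, h'⟩
      · left
        apply Fin.val_injective
        rw [hMtval, h]
      · right
        rw [cycleGraph, SimpleGraph.fromRel_adj]
        constructor
        · intro hvv
          have := congrArg Fin.val hvv
          rw [hMtval, h] at this
          omega
        · left
          rw [hMtval, h, Nat.mod_eq_of_lt h']
      · right
        rw [cycleGraph, SimpleGraph.fromRel_adj]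
        constructor
        · intro hvv
          have := congrArg Fin.val hvv
          rw [hMtval, h] at this
          omega
        · right
          rw [hMtval, h, Nat.sub_add_cancel h', Nat.mod_eq_of_lt v.isLt]
  · -- routeSeq is the identity
    have key : ∀ k (v : Fin n),
        a0 (((((List.range k).map Mt).foldr (· ∘ ·) id) v) : Fin n).val = AtF n a0 k v.val := by
      intro k
      induction k with
      | zero => intro v; rfl
      | succ k ih =>
        intro v
        rw [List.range_succ, List.map_append, List.foldr_append]
        show a0 ((((List.range k).map Mt).foldr (· ∘ ·) (Mt k ∘ id)) v).val = _
        rw [foldr_comp_apply]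
        show a0 ((((List.range k).map Mt).foldr (· ∘ ·) id) (Mt k v)).val = _
        rw [ih (Mt k v)]
        rw [At_succ_apply]
    funext v
    show C ((((List.range n).map Mt).foldr (· ∘ ·) id) v) = v
    have h1 := key n v
    rw [At_id n a0 ha0lt ha0inj v.val v.isLt] at h1
    set w := (((List.range n).map Mt).foldr (· ∘ ·) id) v with hw
    have h2 : a0 w.val = (C w : ℕ) := by
      rw [ha0def]
      simp only [dif_pos w.isLt]
    rw [h2] at h1
    exact Fin.val_injective h1
  · simp
  · -- never uses the wrap-around edge
    intro mm hmm
    obtain ⟨t, _, rfl⟩ := List.mem_map.mp hmm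
    intro hcon
    have := congrArg Fin.val hcon
    rw [hMtval] at this
    simp only at this
    rcases tau_cases n t (AtF n a0 t) (n-1) with h | ⟨h, h'⟩ | ⟨h, h'⟩ <;> omega


/-- on the `n`-cycle, every configuration admits a solution using at most `n`
matchings none of which uses the wrap-around edge `(n, 1)` (0-indexed: `(n-1, 0)`);
consequently the stretch factor of `d_max` on `n`-cycles is at most `n`. -/
theorem stmt_8 (n : ℕ) (hn : 3 ≤ n) (C : Fin n ≃ Fin n) :
    ∃ ms : List (Fin n → Fin n),
      Solves (cycleGraph n) (⇑C) ms ∧ ms.length ≤ n ∧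
      ∀ m ∈ ms, m (⟨n - 1, by omega⟩ : Fin n) ≠ (⟨0, by omega⟩ : Fin n) := by
  exact stmt_8' n hn C
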